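/- Let (X, μ, T) be an invertible measure-preserving system with μ a probability measure, let A ⊆ X be measurable with μ(A) > 0, let L ≥ 1 and b be a nonzero integer. Then there exists m with 1 ≤ m ≤ ⌊1/μ(A)^L⌋ + 1 such that for every i with 1 ≤ i ≤ L, μ(A ∩ T^{-imb} A) > 0. -/

import Mathlib

open MeasureTheory ENNReal

section Aux

variable {X : Type*} [MeasurableSpace X] {μ : Measure X}

lemma zpow_measurePreserving (T : Equiv.Perm X) (hT : Measurable T)
    (hT' : Measurable T.symm) (hTμ : MeasurePreserving T μ μ) :
    ∀ n : ℤ, MeasurePreserving ⇑(T ^ n) μ μ := by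
  have e : X ≃ᵐ X := ⟨T, hT, hT'⟩
  have hsymm : MeasurePreserving ⇑T.symm μ μ := by
    have : MeasurePreserving (⟨T, hT, hT'⟩ : X ≃ᵐ X) μ μ := hTμ
    exact this.symm _
  intro n
  induction n using Int.induction_on with
  | zero => simpa using MeasurePreserving.id μ
  | succ k ih =>
      have h1 : (T ^ ((k : ℤ) + 1)) = T ^ (k : ℤ) * T := zpow_add_one T k
      have h2 : ⇑(T ^ (k : ℤ) * T) = ⇑(T ^ (k : ℤ)) ∘ ⇑T := rfl
      rw [h1, h2]
      exact ih.comp hTμ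
  | pred k ih =>
      have h1 : (T ^ (-(k : ℤ) - 1)) = T ^ (-(k : ℤ)) * T⁻¹ := by
        rw [← zpow_neg_one, ← zpow_add]; ring_nf
      have h2 : ⇑(T ^ (-(k : ℤ)) * T⁻¹) = ⇑(T ^ (-(k : ℤ))) ∘ ⇑T.symm := rfl
      rw [h1, h2]
      exact ih.comp hsymm

lemma zpow_preimage_preimage (T : Equiv.Perm X) (A : Set X) (m n : ℤ) :
    ⇑(T ^ n) ⁻¹' (⇑(T ^ m) ⁻¹' A) = ⇑(T ^ (m + n)) ⁻¹' A := by
  rw [← Set.preimage_comp]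
  congr 1
  rw [zpow_add]
  rfl

end Aux

/-- Multiple recurrence along an arithmetic progression: the progression
`{mb, 2mb, …, Lmb}` is contained in the return-time set of `A`, with
`m ≤ ⌊1/μ(A)^L⌋ + 1`. -/
theorem multiple_recurrence_progression
    {X : Type*} [MeasurableSpace X] (μ : Measure X) [IsProbabilityMeasure μ]
    (T : Equiv.Perm X) (hT : Measurable T) (hT' : Measurable T.symm)
    (hTμ : MeasurePreserving T μ μ)
    (A : Set X) (hA : MeasurableSet A) (hpos : 0 < μ A)
    (L : ℕ) (hL : 1 ≤ L) (b : ℤ) (hb : b ≠ 0) :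
    ∃ m : ℕ, 1 ≤ m ∧ m ≤ Nat.floor (1 / (μ A).toReal ^ L) + 1 ∧
      ∀ i : ℕ, 1 ≤ i → i ≤ L →
        0 < μ (A ∩ ⇑(T ^ ((i : ℤ) * (m : ℤ) * b)) ⁻¹' A) := by
  classical
  have hmp : ∀ n : ℤ, MeasurePreserving ⇑(T ^ n) μ μ :=
    zpow_measurePreserving T hT hT' hTμ
  set α : ℝ := (μ A).toReal with hα
  have hμA_ne_top : μ A ≠ ⊤ := (measure_lt_top μ A).ne
  have hαpos : 0 < α := ENNReal.toReal_pos hpos.ne' hμA_ne_top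
  have hαLpos : 0 < α ^ L := pow_pos hαpos L
  set N : ℕ := Nat.floor (1 / α ^ L) + 1 with hN
  -- product space
  set P : Measure (Fin L → X) := Measure.pi (fun _ => μ) with hP
  haveI : IsProbabilityMeasure P := by rw [hP]; infer_instance
  -- the sets
  set s : ℕ → Set (Fin L → X) :=
    fun k => Set.pi Set.univ (fun i : Fin L => ⇑(T ^ (((i : ℕ) + 1 : ℤ) * b * k)) ⁻¹' A)
    with hs
  have hsm : ∀ k, MeasurableSet (s k) := by
    intro k
    exact MeasurableSet.univ_pi fun i => (hmp _).measurable hA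
  have hsmeas : ∀ k, P (s k) = μ A ^ L := by
    intro k
    rw [hs, hP, Measure.pi_pi]
    have : ∀ i : Fin L, μ (⇑(T ^ (((i : ℕ) + 1 : ℤ) * b * k)) ⁻¹' A) = μ A := by
      intro i; exact (hmp _).measure_preimage hA.nullMeasurableSet
    simp [this]
  -- pigeonhole: two of s 0, …, s N overlap with positive measure
  have key : ∃ k k' : ℕ, k < k' ∧ k' ≤ N ∧ 0 < P (s k ∩ s k') := by
    by_contra hcon
    push_neg at hcon
    have hae : (↑(Finset.range (N + 1)) : Set ℕ).Pairwise (Function.onFun (AEDisjoint P) s) := by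
      intro k hk k' hk' hne
      simp only [Finset.coe_range, Set.mem_Iio] at hk hk'
      rcases hne.lt_or_gt with h | h
      · exact le_antisymm (hcon k k' h (Nat.lt_succ_iff.mp hk')) (zero_le)
      · have := le_antisymm (hcon k' k h (Nat.lt_succ_iff.mp hk)) (zero_le)
        show P (s k ∩ s k') = 0
        rw [Set.inter_comm]; exact this
    have hle : ∑ k ∈ Finset.range (N + 1), P (s k) ≤ P Set.univ := by
      rw [← measure_biUnion_finset₀ hae fun k _ => (hsm k).nullMeasurableSet]
      exact measure_mono (Set.subset_univ _)
    rw [measure_univ] at hle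
    have hsum : ∑ k ∈ Finset.range (N + 1), P (s k) = (N + 1 : ℕ) * μ A ^ L := by
      simp [hsmeas, Finset.sum_const]
    rw [hsum] at hle
    -- but (N+1) * μ(A)^L > 1
    have hgt : (1 : ℝ≥0∞) < (N + 1 : ℕ) * μ A ^ L := by
      have hAα : μ A = ENNReal.ofReal α := by
        rw [hα, ENNReal.ofReal_toReal hμA_ne_top]
      have hr : (1 : ℝ) < ((N + 1 : ℕ) : ℝ) * α ^ L := by
        have h1 : 1 / α ^ L < ((N : ℕ) : ℝ) := by
          rw [hN]
          push_cast
          exact Nat.lt_floor_add_one _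
        have h2 : 1 / α ^ L < ((N + 1 : ℕ) : ℝ) := by push_cast at h1 ⊢; linarith
        calc (1 : ℝ) = (1 / α ^ L) * α ^ L := by field_simp
          _ < ((N + 1 : ℕ) : ℝ) * α ^ L := by
              exact mul_lt_mul_of_pos_right h2 hαLpos
      rw [hAα, ← ENNReal.ofReal_pow hαpos.le, ← ENNReal.ofReal_natCast,
        ← ENNReal.ofReal_mul (by positivity), show (1 : ℝ≥0∞) = ENNReal.ofReal 1 from
          ENNReal.ofReal_one.symm]
      exact (ENNReal.ofReal_lt_ofReal_iff (by positivity)).mpr hr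
    exact absurd (lt_of_lt_of_le hgt hle) (lt_irrefl _)
  obtain ⟨k, k', hkk', hk'N, hposP⟩ := key
  refine ⟨k' - k, Nat.le_sub_of_add_le (by omega), by omega, ?_⟩
  intro i hi1 hiL
  -- from positivity of product measure, get positivity on coordinate i-1
  have hik : s k ∩ s k' = Set.pi Set.univ
      (fun j : Fin L => ⇑(T ^ (((j : ℕ) + 1 : ℤ) * b * k)) ⁻¹' A ∩
        ⇑(T ^ (((j : ℕ) + 1 : ℤ) * b * k')) ⁻¹' A) := by
    rw [hs, ← Set.pi_inter_distrib]
  rw [hik, hP, Measure.pi_pi] at hposP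
  have hcoord : ∀ j : Fin L,
      0 < μ (⇑(T ^ (((j : ℕ) + 1 : ℤ) * b * k)) ⁻¹' A ∩
        ⇑(T ^ (((j : ℕ) + 1 : ℤ) * b * k')) ⁻¹' A) := by
    intro j
    by_contra hz
    push_neg at hz
    have : μ (_ ∩ _) = 0 := le_antisymm hz (zero_le)
    rw [Finset.prod_eq_zero (Finset.mem_univ j) this] at hposP
    exact lt_irrefl _ hposP
  set j : Fin L := ⟨i - 1, by omega⟩ with hj
  have hj1 : ((j : ℕ) + 1 : ℤ) = (i : ℤ) := by
    simp [hj]; omega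
  have := hcoord j
  rw [hj1] at this
  -- rewrite the intersection as preimage under T^(i*b*k) of the target set
  have hrw : ⇑(T ^ ((i : ℤ) * b * k)) ⁻¹' A ∩ ⇑(T ^ ((i : ℤ) * b * k')) ⁻¹' A =
      ⇑(T ^ ((i : ℤ) * b * k)) ⁻¹' (A ∩ ⇑(T ^ ((i : ℤ) * ((k' : ℤ) - (k : ℤ)) * b)) ⁻¹' A) := by
    rw [Set.preimage_inter, zpow_preimage_preimage]
    congr 2
    ring
  rw [hrw] at this
  rw [(hmp ((i : ℤ) * b * k)).measure_preimage] at this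
  · have hcast : ((k' - k : ℕ) : ℤ) = (k' : ℤ) - (k : ℤ) := by omega
    rw [hcast]
    exact this
  · exact (hA.inter ((hmp _).measurable hA)).nullMeasurableSet
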